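/- Fix r ≥ 1 and g ≥ 1. Define transformations on (ℤ/r)^{2g} (viewed as tuples (s₁,t₁,…,s_g,t_g)): Uᵢ : (…,sᵢ,tᵢ,…) ↦ (…,sᵢ,tᵢ−sᵢ,…), Vᵢ : (…,sᵢ,tᵢ,…) ↦ (…,sᵢ+tᵢ,tᵢ,…), and Wᵢ : (…,sᵢ,tᵢ,s_{i+1},t_{i+1},…) ↦ (…,sᵢ,tᵢ−sᵢ+s_{i+1}−1,s_{i+1},t_{i+1}+sᵢ−s_{i+1}+1,…) for 1 ≤ i ≤ g−1. Then for g ≥ 2 and r odd, the group generated by the Uᵢ, Vᵢ, Wᵢ and their inverses acts transitively on (ℤ/r)^{2g}. -/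

import Mathlib

/-- An `r`-th root, written as a tuple `(s₁,t₁,…,s_g,t_g)` in `(ℤ/r)^{2g}`,
encoded as a function `Fin g → ZMod r × ZMod r`. -/
abbrev RootTuple (r g : ℕ) := Fin g → ZMod r × ZMod r

/-- One application of a basic Dehn twist `Uᵢ`, `Vᵢ` or `W_{i,i+1}`. -/
def dehnStep (r g : ℕ) (δ δ' : RootTuple r g) : Prop :=
  (∃ i : Fin g, δ' = Function.update δ i ((δ i).1, (δ i).2 - (δ i).1)) ∨
  (∃ i : Fin g, δ' = Function.update δ i ((δ i).1 + (δ i).2, (δ i).2)) ∨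
  (∃ (i : Fin g) (hi : (i : ℕ) + 1 < g),
    δ' = Function.update
      (Function.update δ i
        ((δ i).1, (δ i).2 - (δ i).1 + (δ ⟨i + 1, hi⟩).1 - 1))
      ⟨i + 1, hi⟩
      ((δ ⟨i + 1, hi⟩).1, (δ ⟨i + 1, hi⟩).2 + (δ i).1 - (δ ⟨i + 1, hi⟩).1 + 1))

namespace DehnAux

variable {r g : ℕ}

lemma stepU (δ : RootTuple r g) (i : Fin g) :
    Relation.EqvGen (dehnStep r g) δ
      (Function.update δ i ((δ i).1, (δ i).2 - (δ i).1)) :=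
  Relation.EqvGen.rel _ _ (Or.inl ⟨i, rfl⟩)

lemma stepV (δ : RootTuple r g) (i : Fin g) :
    Relation.EqvGen (dehnStep r g) δ
      (Function.update δ i ((δ i).1 + (δ i).2, (δ i).2)) :=
  Relation.EqvGen.rel _ _ (Or.inr (Or.inl ⟨i, rfl⟩))

lemma stepW (δ : RootTuple r g) (i : Fin g) (hi : (i : ℕ) + 1 < g) :
    Relation.EqvGen (dehnStep r g) δ
      (Function.update
        (Function.update δ i
          ((δ i).1, (δ i).2 - (δ i).1 + (δ ⟨i + 1, hi⟩).1 - 1))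
        ⟨i + 1, hi⟩
        ((δ ⟨i + 1, hi⟩).1, (δ ⟨i + 1, hi⟩).2 + (δ i).1 - (δ ⟨i + 1, hi⟩).1 + 1)) :=
  Relation.EqvGen.rel _ _ (Or.inr (Or.inr ⟨i, hi, rfl⟩))

/-- Moves on a single pair. -/
inductive PairStep (r : ℕ) : ZMod r × ZMod r → ZMod r × ZMod r → Prop
  | U (p) : PairStep r p (p.1, p.2 - p.1)
  | V (p) : PairStep r p (p.1 + p.2, p.2)

lemma lift_pair {p q : ZMod r × ZMod r} (h : Relation.EqvGen (PairStep r) p q) :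
    ∀ (δ : RootTuple r g) (i : Fin g), δ i = p →
      Relation.EqvGen (dehnStep r g) δ (Function.update δ i q) := by
  induction h with
  | rel x y hxy =>
    intro δ i hδ
    cases hxy with
    | U => rw [← hδ]; exact stepU δ i
    | V => rw [← hδ]; exact stepV δ i
  | refl x =>
    intro δ i hδ
    rw [← hδ, Function.update_eq_self]
    exact Relation.EqvGen.refl δ
  | symm x y hxy ih =>
    intro δ i hδ
    have h2 := ih (Function.update δ i x) i (Function.update_self i x δ)
    rw [Function.update_idem, ← hδ, Function.update_eq_self] at h2
    exact Relation.EqvGen.symm _ _ h2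
  | trans x y z h1 h2 ih1 ih2 =>
    intro δ i hδ
    have a1 := ih1 δ i hδ
    have a2 := ih2 (Function.update δ i y) i (Function.update_self i y δ)
    rw [Function.update_idem] at a2
    exact Relation.EqvGen.trans _ _ _ a1 a2

lemma pU (p : ZMod r × ZMod r) : Relation.EqvGen (PairStep r) p (p.1, p.2 - p.1) :=
  Relation.EqvGen.rel _ _ (PairStep.U p)

lemma pV (p : ZMod r × ZMod r) : Relation.EqvGen (PairStep r) p (p.1 + p.2, p.2) :=
  Relation.EqvGen.rel _ _ (PairStep.V p)

lemma pCongr {x y y' : ZMod r × ZMod r} (h : Relation.EqvGen (PairStep r) x y)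
    (e : y = y') : Relation.EqvGen (PairStep r) x y' := e ▸ h

lemma pU_nat (p : ZMod r × ZMod r) (n : ℕ) :
    Relation.EqvGen (PairStep r) p (p.1, p.2 - (n : ZMod r) * p.1) := by
  induction n with
  | zero => exact pCongr (Relation.EqvGen.refl p) (by simp)
  | succ n ih =>
    refine Relation.EqvGen.trans _ _ _ ih (pCongr (pU _) ?_)
    rw [Prod.mk.injEq]
    exact ⟨rfl, by push_cast; ring⟩

lemma pV_nat (p : ZMod r × ZMod r) (n : ℕ) :
    Relation.EqvGen (PairStep r) p (p.1 + (n : ZMod r) * p.2, p.2) := by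
  induction n with
  | zero => exact pCongr (Relation.EqvGen.refl p) (by simp)
  | succ n ih =>
    refine Relation.EqvGen.trans _ _ _ ih (pCongr (pV _) ?_)
    rw [Prod.mk.injEq]
    exact ⟨by push_cast; ring, rfl⟩

lemma pU_any [NeZero r] (p : ZMod r × ZMod r) (c : ZMod r) :
    Relation.EqvGen (PairStep r) p (p.1, p.2 - c * p.1) := by
  have := pU_nat p c.val
  rwa [ZMod.natCast_val, ZMod.cast_id] at this

lemma pSwap (p : ZMod r × ZMod r) :
    Relation.EqvGen (PairStep r) p (p.2, -p.1) := by
  refine Relation.EqvGen.trans _ _ _ (pV p) ?_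
  refine Relation.EqvGen.trans _ _ _ (pCongr (pU (p.1 + p.2, p.2)) ?_)
    (pCongr (pV (p.1 + p.2, -p.1)) ?_) <;>
    (rw [Prod.mk.injEq]; exact ⟨by ring, by ring⟩)

lemma pair_zero [NeZero r] : ∀ (n : ℕ) (p : ZMod r × ZMod r), p.1.val ≤ n →
    ∃ e, Relation.EqvGen (PairStep r) p (0, e) := by
  intro n
  induction n with
  | zero =>
    intro p hp
    have h0 : p.1 = 0 := (ZMod.val_eq_zero _).1 (Nat.le_zero.1 hp)
    exact ⟨p.2, pCongr (Relation.EqvGen.refl p) (by rw [← h0])⟩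
  | succ n ih =>
    intro p hp
    by_cases h0 : p.1 = 0
    · exact ⟨p.2, pCongr (Relation.EqvGen.refl p) (by rw [← h0])⟩
    · have hspos : 0 < p.1.val := ZMod.val_pos.2 h0
      have hmlt : p.2.val % p.1.val < p.1.val := Nat.mod_lt _ hspos
      have hmr : p.2.val % p.1.val < r := lt_of_lt_of_le hmlt (le_of_lt (ZMod.val_lt p.1))
      have h1 : Relation.EqvGen (PairStep r) p (p.1, ((p.2.val % p.1.val : ℕ) : ZMod r)) := by
        refine pCongr (pU_any p ((p.2.val / p.1.val : ℕ) : ZMod r)) ?_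
        rw [Prod.mk.injEq]
        refine ⟨rfl, ?_⟩
        have hd := Nat.div_add_mod p.2.val p.1.val
        have h2 := congrArg (fun k : ℕ => (k : ZMod r)) hd
        push_cast at h2
        rw [ZMod.natCast_val, ZMod.cast_id, ZMod.natCast_val, ZMod.cast_id] at h2
        linear_combination -h2
      have h2 : Relation.EqvGen (PairStep r) p (((p.2.val % p.1.val : ℕ) : ZMod r), -p.1) :=
        Relation.EqvGen.trans _ _ _ h1 (pSwap _)
      have hval : ((((p.2.val % p.1.val : ℕ) : ZMod r)), -p.1).1.val ≤ n := by
        simp only [ZMod.val_cast_of_lt hmr]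
        omega
      obtain ⟨e, he⟩ := ih _ hval
      exact ⟨e, Relation.EqvGen.trans _ _ _ h2 he⟩

/-- Moves on two adjacent pairs. -/
inductive QuadStep (r : ℕ) :
    (ZMod r × ZMod r) × (ZMod r × ZMod r) → (ZMod r × ZMod r) × (ZMod r × ZMod r) → Prop
  | Ub (x) : QuadStep r x (x.1, (x.2.1, x.2.2 - x.2.1))
  | Vb (x) : QuadStep r x (x.1, (x.2.1 + x.2.2, x.2.2))
  | W (x) : QuadStep r x
      ((x.1.1, x.1.2 - x.1.1 + x.2.1 - 1), (x.2.1, x.2.2 + x.1.1 - x.2.1 + 1))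

lemma lift_quad (i : Fin g) (hi : (i : ℕ) + 1 < g)
    {x y : (ZMod r × ZMod r) × (ZMod r × ZMod r)}
    (h : Relation.EqvGen (QuadStep r) x y) :
    ∀ δ : RootTuple r g, δ i = x.1 → δ ⟨i + 1, hi⟩ = x.2 →
      Relation.EqvGen (dehnStep r g) δ
        (Function.update (Function.update δ i y.1) ⟨i + 1, hi⟩ y.2) := by
  have hij : i ≠ (⟨i + 1, hi⟩ : Fin g) := by
    intro hc
    have := congrArg (Fin.val) hc
    simp at this
  induction h with
  | rel x y hxy =>
    intro δ h1 h2
    cases hxy with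
    | Ub =>
      rw [← h1, ← h2, Function.update_eq_self]
      exact stepU δ _
    | Vb =>
      rw [← h1, ← h2, Function.update_eq_self]
      exact stepV δ _
    | W =>
      rw [← h1, ← h2]
      exact stepW δ i hi
  | refl x =>
    intro δ h1 h2
    rw [← h1, ← h2, Function.update_eq_self, Function.update_eq_self]
    exact Relation.EqvGen.refl δ
  | symm x y hxy ih =>
    intro δ h1 h2
    set j : Fin g := ⟨i + 1, hi⟩ with hj
    set δ₂ := Function.update (Function.update δ i x.1) j x.2 with hδ₂
    have e1 : δ₂ i = x.1 := by
      rw [hδ₂, Function.update_of_ne hij, Function.update_self]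
    have e2 : δ₂ j = x.2 := Function.update_self _ _ _
    have h3 := ih δ₂ e1 e2
    have e3 : Function.update (Function.update δ₂ i y.1) j y.2 = δ := by
      funext k
      by_cases hkj : k = j
      · subst hkj
        rw [Function.update_self, h2]
      · by_cases hki : k = i
        · subst hki
          rw [Function.update_of_ne hkj, Function.update_self, h1]
        · rw [Function.update_of_ne hkj, Function.update_of_ne hki, hδ₂,
            Function.update_of_ne hkj, Function.update_of_ne hki]
    rw [e3] at h3
    exact Relation.EqvGen.symm _ _ h3
  | trans x y z hxy hyz ih1 ih2 =>
    intro δ h1 h2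
    set j : Fin g := ⟨i + 1, hi⟩ with hj
    have a1 := ih1 δ h1 h2
    set D := Function.update (Function.update δ i y.1) j y.2 with hD
    have e1 : D i = y.1 := by
      rw [hD, Function.update_of_ne hij, Function.update_self]
    have e2 : D j = y.2 := Function.update_self _ _ _
    have a2 := ih2 D e1 e2
    have e3 : Function.update (Function.update D i z.1) j z.2 =
        Function.update (Function.update δ i z.1) j z.2 := by
      funext k
      by_cases hkj : k = j
      · subst hkj; rw [Function.update_self, Function.update_self]
      · by_cases hki : k = i
        · subst hki
          rw [Function.update_of_ne hkj, Function.update_self,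
            Function.update_of_ne hkj, Function.update_self]
        · rw [Function.update_of_ne hkj, Function.update_of_ne hki, hD,
            Function.update_of_ne hkj, Function.update_of_ne hki,
            Function.update_of_ne hkj, Function.update_of_ne hki]
    rw [e3] at a2
    exact Relation.EqvGen.trans _ _ _ a1 a2

lemma qCongr {x y y' : (ZMod r × ZMod r) × (ZMod r × ZMod r)}
    (h : Relation.EqvGen (QuadStep r) x y) (e : y = y') :
    Relation.EqvGen (QuadStep r) x y' := e ▸ h

lemma qUb (x : (ZMod r × ZMod r) × (ZMod r × ZMod r)) :
    Relation.EqvGen (QuadStep r) x (x.1, (x.2.1, x.2.2 - x.2.1)) :=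
  Relation.EqvGen.rel _ _ (QuadStep.Ub x)

lemma qVb (x : (ZMod r × ZMod r) × (ZMod r × ZMod r)) :
    Relation.EqvGen (QuadStep r) x (x.1, (x.2.1 + x.2.2, x.2.2)) :=
  Relation.EqvGen.rel _ _ (QuadStep.Vb x)

lemma qW (x : (ZMod r × ZMod r) × (ZMod r × ZMod r)) :
    Relation.EqvGen (QuadStep r) x
      ((x.1.1, x.1.2 - x.1.1 + x.2.1 - 1), (x.2.1, x.2.2 + x.1.1 - x.2.1 + 1)) :=
  Relation.EqvGen.rel _ _ (QuadStep.W x)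

lemma qUb_nat (x : (ZMod r × ZMod r) × (ZMod r × ZMod r)) (n : ℕ) :
    Relation.EqvGen (QuadStep r) x (x.1, (x.2.1, x.2.2 - (n : ZMod r) * x.2.1)) := by
  induction n with
  | zero => exact qCongr (Relation.EqvGen.refl x) (by simp)
  | succ n ih =>
    refine Relation.EqvGen.trans _ _ _ ih (qCongr (qUb _) ?_)
    exact Prod.ext rfl (Prod.ext rfl (by push_cast; ring))

lemma qUb_any [NeZero r] (x : (ZMod r × ZMod r) × (ZMod r × ZMod r)) (c : ZMod r) :
    Relation.EqvGen (QuadStep r) x (x.1, (x.2.1, x.2.2 - c * x.2.1)) := by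
  have := qUb_nat x c.val
  rwa [ZMod.natCast_val, ZMod.cast_id] at this

lemma qW_nat (x : (ZMod r × ZMod r) × (ZMod r × ZMod r)) (n : ℕ) :
    Relation.EqvGen (QuadStep r) x
      ((x.1.1, x.1.2 + (n : ZMod r) * (x.2.1 - x.1.1 - 1)),
       (x.2.1, x.2.2 + (n : ZMod r) * (x.1.1 - x.2.1 + 1))) := by
  induction n with
  | zero => exact qCongr (Relation.EqvGen.refl x) (by simp)
  | succ n ih =>
    refine Relation.EqvGen.trans _ _ _ ih (qCongr (qW _) ?_)
    exact Prod.ext (Prod.ext rfl (by push_cast; ring)) (Prod.ext rfl (by push_cast; ring))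

lemma qW_any [NeZero r] (x : (ZMod r × ZMod r) × (ZMod r × ZMod r)) (c : ZMod r) :
    Relation.EqvGen (QuadStep r) x
      ((x.1.1, x.1.2 + c * (x.2.1 - x.1.1 - 1)),
       (x.2.1, x.2.2 + c * (x.1.1 - x.2.1 + 1))) := by
  have := qW_nat x c.val
  rwa [ZMod.natCast_val, ZMod.cast_id] at this

lemma chain [NeZero r] (T : ZMod r) :
    Relation.EqvGen (QuadStep r)
      (((0 : ZMod r), (0 : ZMod r)), ((0 : ZMod r), T))
      (((0 : ZMod r), (0 : ZMod r)), ((0 : ZMod r), T - 2)) := by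
  have h1 : Relation.EqvGen (QuadStep r)
      (((0 : ZMod r), (0 : ZMod r)), ((0 : ZMod r), T))
      (((0 : ZMod r), (0 : ZMod r)), (T, T)) :=
    qCongr (qVb _) (Prod.ext rfl (Prod.ext (by simp) rfl))
  have h2 : Relation.EqvGen (QuadStep r)
      (((0 : ZMod r), (0 : ZMod r)), (T, T))
      (((0 : ZMod r), T - 1), (T, (1 : ZMod r))) :=
    qCongr (qW_any _ 1)
      (Prod.ext (Prod.ext rfl (by show (0 : ZMod r) + 1 * (T - 0 - 1) = T - 1; ring))
        (Prod.ext rfl (by show T + 1 * (0 - T + 1) = 1; ring)))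
  have h3 : Relation.EqvGen (QuadStep r)
      (((0 : ZMod r), T - 1), (T, (1 : ZMod r)))
      (((0 : ZMod r), T - 1), (T, 1 - T)) :=
    qCongr (qUb _) (Prod.ext rfl (Prod.ext rfl rfl))
  have h4 : Relation.EqvGen (QuadStep r)
      (((0 : ZMod r), T - 1), (T, 1 - T))
      (((0 : ZMod r), T - 1), ((1 : ZMod r), 1 - T)) :=
    qCongr (qVb _) (Prod.ext rfl (Prod.ext (by show T + (1 - T) = 1; ring) rfl))
  have h5 : Relation.EqvGen (QuadStep r)
      (((0 : ZMod r), T - 1), ((1 : ZMod r), 1 - T))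
      (((0 : ZMod r), T - 1), ((1 : ZMod r), -1)) :=
    qCongr (qUb_any _ (2 - T))
      (Prod.ext rfl (Prod.ext rfl (by show 1 - T - (2 - T) * 1 = -1; ring)))
  have h6 : Relation.EqvGen (QuadStep r)
      (((0 : ZMod r), T - 1), ((1 : ZMod r), -1))
      (((0 : ZMod r), T - 1), ((0 : ZMod r), -1)) :=
    qCongr (qVb _) (Prod.ext rfl (Prod.ext (by show (1 : ZMod r) + (-1) = 0; ring) rfl))
  have h7 : Relation.EqvGen (QuadStep r)
      (((0 : ZMod r), T - 1), ((0 : ZMod r), -1))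
      (((0 : ZMod r), (0 : ZMod r)), ((0 : ZMod r), T - 2)) :=
    qCongr (qW_any _ (T - 1))
      (Prod.ext (Prod.ext rfl (by show T - 1 + (T - 1) * (0 - 0 - 1) = 0; ring))
        (Prod.ext rfl (by show -1 + (T - 1) * (0 - 0 + 1) = T - 2; ring)))
  exact ((((((h1.trans _ _ _ h2).trans _ _ _ h3).trans _ _ _ h4).trans _ _ _
    h5).trans _ _ _ h6).trans _ _ _ h7)

lemma chain_iter [NeZero r] (T : ZMod r) (k : ℕ) :
    Relation.EqvGen (QuadStep r)
      (((0 : ZMod r), (0 : ZMod r)), ((0 : ZMod r), T))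
      (((0 : ZMod r), (0 : ZMod r)), ((0 : ZMod r), T - 2 * (k : ZMod r))) := by
  induction k with
  | zero => exact qCongr (Relation.EqvGen.refl _) (by simp)
  | succ k ih =>
    refine Relation.EqvGen.trans _ _ _ ih (qCongr (chain _) ?_)
    refine Prod.ext rfl (Prod.ext rfl ?_)
    push_cast
    ring

lemma descend [NeZero r] (hodd : Odd r) (T : ZMod r) :
    Relation.EqvGen (QuadStep r)
      (((0 : ZMod r), (0 : ZMod r)), ((0 : ZMod r), T))
      (((0 : ZMod r), (0 : ZMod r)), ((0 : ZMod r), (0 : ZMod r))) := by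
  set k : ℕ := T.val * ((r + 1) / 2) with hk
  refine qCongr (chain_iter T k) (Prod.ext rfl (Prod.ext rfl ?_))
  have h2 : (r + 1) / 2 * 2 = r + 1 := Nat.div_mul_cancel (Even.two_dvd hodd.add_one)
  have : (2 : ZMod r) * (k : ZMod r) = T := by
    have : ((2 * k : ℕ) : ZMod r) = ((T.val * (r + 1) : ℕ) : ZMod r) := by
      congr 1
      rw [hk, mul_comm 2 (T.val * ((r + 1) / 2)), mul_assoc, h2]
    push_cast at this
    rw [ZMod.natCast_val, ZMod.cast_id, ZMod.natCast_self] at this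
    rw [this]
    ring
  rw [this]
  ring

lemma zeroS [NeZero r] : ∀ (l : List (Fin g)) (δ : RootTuple r g),
    (∀ i, i ∉ l → (δ i).1 = 0) →
    ∃ δ', Relation.EqvGen (dehnStep r g) δ δ' ∧ ∀ i, (δ' i).1 = 0 := by
  intro l
  induction l with
  | nil => exact fun δ h => ⟨δ, Relation.EqvGen.refl δ, fun i => h i List.not_mem_nil⟩
  | cons a l ih =>
    intro δ h
    obtain ⟨e, he⟩ := pair_zero ((δ a).1).val (δ a) le_rfl
    have hlift := lift_pair he δ a rfl
    have hcond : ∀ i, i ∉ l → ((Function.update δ a (0, e)) i).1 = 0 := by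
      intro i hi
      by_cases hia : i = a
      · subst hia; rw [Function.update_self]
      · rw [Function.update_of_ne hia]
        exact h i (by simp [hia, hi])
    obtain ⟨δ', h1, h2⟩ := ih (Function.update δ a (0, e)) hcond
    exact ⟨δ', Relation.EqvGen.trans _ _ _ hlift h1, h2⟩

lemma gather [NeZero r] (hg : 2 ≤ g) : ∀ (m : ℕ), m ≤ g - 1 →
    ∀ δ : RootTuple r g, (∀ i, (δ i).1 = 0) →
    ∃ δ', Relation.EqvGen (dehnStep r g) δ δ' ∧ (∀ i, (δ' i).1 = 0) ∧
      (∀ i : Fin g, (i : ℕ) < m → (δ' i).2 = 0) := by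
  intro m
  induction m with
  | zero =>
    exact fun _ δ h => ⟨δ, Relation.EqvGen.refl δ, h, fun i hi => absurd hi (Nat.not_lt_zero _)⟩
  | succ m ih =>
    intro hm δ h
    obtain ⟨δ', h1, h2, h3⟩ := ih (by omega) δ h
    have ha : m < g := by omega
    set a : Fin g := ⟨m, ha⟩ with hadef
    have hi : (a : ℕ) + 1 < g := by show m + 1 < g; omega
    set b : Fin g := ⟨(a : ℕ) + 1, hi⟩ with hbdef
    have hq := qW_any (r := r) (((0, (δ' a).2), (0, (δ' b).2))) ((δ' a).2)
    have hq' : Relation.EqvGen (QuadStep r)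
        (((0 : ZMod r), (δ' a).2), ((0 : ZMod r), (δ' b).2))
        (((0 : ZMod r), (0 : ZMod r)), ((0 : ZMod r), (δ' b).2 + (δ' a).2)) :=
      qCongr hq
        (Prod.ext (Prod.ext rfl (by show (δ' a).2 + (δ' a).2 * (0 - 0 - 1) = 0; ring))
          (Prod.ext rfl (by show (δ' b).2 + (δ' a).2 * (0 - 0 + 1) = (δ' b).2 + (δ' a).2; ring)))
    have hl := lift_quad a hi hq' δ' (Prod.ext (h2 a) rfl) (Prod.ext (h2 b) rfl)
    refine ⟨_, Relation.EqvGen.trans _ _ _ h1 hl, ?_, ?_⟩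
    · intro i
      by_cases hib : i = b
      · subst hib; rw [Function.update_self]
      · rw [Function.update_of_ne hib]
        by_cases hia : i = a
        · subst hia; rw [Function.update_self]
        · rw [Function.update_of_ne hia]; exact h2 i
    · intro i hilt
      by_cases hib : i = b
      · exfalso
        have : (i : ℕ) = m + 1 := by rw [hib]
        omega
      · rw [Function.update_of_ne hib]
        by_cases hia : i = a
        · subst hia; rw [Function.update_self]
        · rw [Function.update_of_ne hia]
          refine h3 i ?_
          have : (i : ℕ) ≠ m := fun hc => hia (Fin.ext hc)
          omega

lemma to_zero [NeZero r] (hodd : Odd r) (hg : 2 ≤ g) (δ0 : RootTuple r g) :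
    Relation.EqvGen (dehnStep r g) δ0 (fun _ => ((0 : ZMod r), (0 : ZMod r))) := by
  obtain ⟨δ1, H1, S1⟩ := zeroS (List.finRange g) δ0
    (fun i hi => absurd (List.mem_finRange i) hi)
  obtain ⟨δ2, H2, S2, T2⟩ := gather hg (g - 1) le_rfl δ1 S1
  have hag : g - 2 < g := by omega
  set a : Fin g := ⟨g - 2, hag⟩ with hadef
  have hi : (a : ℕ) + 1 < g := by show g - 2 + 1 < g; omega
  set b : Fin g := ⟨(a : ℕ) + 1, hi⟩ with hbdef
  have ea : δ2 a = ((0 : ZMod r), (0 : ZMod r)) :=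
    Prod.ext (S2 a) (T2 a (by show g - 2 < g - 1; omega))
  have eb : δ2 b = ((0 : ZMod r), (δ2 b).2) := Prod.ext (S2 b) rfl
  have hl := lift_quad a hi (descend hodd ((δ2 b).2)) δ2 ea eb
  have e : Function.update (Function.update δ2 a ((0 : ZMod r), (0 : ZMod r))) b
      ((0 : ZMod r), (0 : ZMod r)) = fun _ => ((0 : ZMod r), (0 : ZMod r)) := by
    funext k
    by_cases hkb : k = b
    · subst hkb; rw [Function.update_self]
    · rw [Function.update_of_ne hkb]
      by_cases hka : k = a
      · subst hka; rw [Function.update_self]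
      · rw [Function.update_of_ne hka]
        have hkb' : (k : ℕ) ≠ g - 2 + 1 := fun hc => hkb (Fin.ext hc)
        have hklt : (k : ℕ) < g := k.isLt
        exact Prod.ext (S2 k) (T2 k (by omega))
  rw [e] at hl
  exact Relation.EqvGen.trans _ _ _ H1 (Relation.EqvGen.trans _ _ _ H2 hl)

end DehnAux

/-- For `g ≥ 2` and `r` odd, the group generated by the Dehn twist
transformations and their inverses acts transitively on `(ℤ/r)^{2g}`. -/
theorem dehn_transitive_odd (r g : ℕ) (hr : 1 ≤ r) (hodd : Odd r) (hg : 2 ≤ g)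
    (δ δ' : RootTuple r g) :
    Relation.EqvGen (dehnStep r g) δ δ' := by
  haveI : NeZero r := ⟨by omega⟩
  exact Relation.EqvGen.trans _ _ _ (DehnAux.to_zero hodd hg δ)
    (Relation.EqvGen.symm _ _ (DehnAux.to_zero hodd hg δ'))
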